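/- arXiv:1005.3913 — 2 statements merged into one kernel-verified Lean document; each statement's English description precedes it below -/
import Mathlib

section
/- Conjecture 2 implies Conjecture 1 for λ > 1: fix n ≥ 2 and α > 1/2, and suppose that for every nonnegative increasing function h on [0,∞), the condition ∫₀¹ (h(tx)/x)(1-x)^{n-1} dx ≤ t^α for all t ≥ 0 implies ∫₀^∞ (h(t)/t) dt/(1+t^{2α}) ≤ (π/2) ∏_{k=1}^{n-1}(1+α/k). Then with λ = 2α, for every nonnegative increasing logarithmically convex S on [0,∞) with S(0)=0 (represented as S(x)=∫₀ˣ s(τ)/τ dτ with s increasing and nonnegative), the condition ∫₀¹ S(tx)(1-x²)^{n-2} x dx ≤ t^λ for all t ≥ 0 implies ∫₀^∞ S(t) t^{2λ-1}/(1+t^{2λ})² dt ≤ (π(n-1)/(2λ)) ∏_{k=1}^{n-1}(1+λ/(2k)). -/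
open Real MeasureTheory Finset

section Aux
open Set ENNReal Filter

lemma aux_image_sq_Ioi : (fun x : ℝ => x^2) '' Set.Ioi 0 = Set.Ioi 0 := by
  ext y
  constructor
  · rintro ⟨x, hx, rfl⟩; exact pow_pos (show (0:ℝ) < x from hx) 2
  · intro hy
    exact ⟨Real.sqrt y, Real.sqrt_pos.2 hy, Real.sq_sqrt (le_of_lt hy)⟩

lemma aux_image_sq_Ioo : (fun x : ℝ => x^2) '' Set.Ioo 0 1 = Set.Ioo 0 1 := by
  ext y
  constructor
  · rintro ⟨x, hx, rfl⟩
    exact ⟨pow_pos hx.1 2, by show x^2 < 1; nlinarith [hx.1, hx.2]⟩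
  · intro hy
    refine ⟨Real.sqrt y, ⟨Real.sqrt_pos.2 hy.1, ?_⟩, Real.sq_sqrt (le_of_lt hy.1)⟩
    have := Real.sqrt_lt_sqrt (le_of_lt hy.1) hy.2
    simpa using this

lemma aux_image_div_Ioo (t : ℝ) (ht : 0 < t) :
    (fun τ : ℝ => τ / t) '' Set.Ioo 0 t = Set.Ioo 0 1 := by
  ext y
  constructor
  · rintro ⟨x, hx, rfl⟩
    exact ⟨div_pos hx.1 ht, (div_lt_one ht).2 hx.2⟩
  · intro hy
    exact ⟨y * t, ⟨mul_pos hy.1 ht, by nlinarith [hy.2]⟩, by field_simp⟩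

lemma aux_integral_sq (U : Set ℝ) (hU : MeasurableSet U) (hpos : U ⊆ Set.Ioi 0) (G : ℝ → ℝ) :
    ∫ u in (fun x : ℝ => x^2) '' U, G u = ∫ x in U, |2*x| * G (x^2) := by
  have h := integral_image_eq_integral_abs_deriv_smul (f := fun x : ℝ => x^2)
    (f' := fun x : ℝ => 2*x) hU (fun x _ => by
      simpa using (hasDerivAt_pow 2 x).hasDerivWithinAt) ?_ G
  · simpa using h
  · intro x hx y hy hxy
    have hx' := hpos hx; have hy' := hpos hy
    simp only [Set.mem_Ioi] at hx' hy'
    have hxy' : x^2 = y^2 := hxy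
    nlinarith [hxy']

lemma aux_integral_div (t : ℝ) (ht : 0 < t) (G : ℝ → ℝ) :
    ∫ u in (fun τ : ℝ => τ / t) '' Set.Ioo 0 t, G u
      = ∫ τ in Set.Ioo 0 t, |1/t| * G (τ/t) := by
  have h := integral_image_eq_integral_abs_deriv_smul (s := Set.Ioo (0:ℝ) t)
    (f := fun τ : ℝ => τ / t)
    (f' := fun _ : ℝ => 1/t) measurableSet_Ioo (fun x _ => by
      have := (hasDerivAt_mul_const (x := x) t⁻¹).hasDerivWithinAt (s := Set.Ioo (0:ℝ) t)
      simpa [div_eq_mul_inv, one_div] using this)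
    (fun x _ y _ hxy => by
      have h2 : x / t = y / t := hxy
      field_simp at h2; exact h2) G
  simpa using h

lemma tonelli_aux (F K : ℝ → ℝ≥0∞) (hF : Measurable F) (hK : Measurable K)
    (t : ℝ) (ht : 0 < t) (U : Set ℝ) :
    ∫⁻ x in U, (∫⁻ τ in Set.Ioo 0 (t*x), F τ) * K x
      = ∫⁻ τ in Set.Ioi 0, F τ * ∫⁻ x in Set.Ioi (τ/t) ∩ U, K x := by
  set G : ℝ × ℝ → ℝ≥0∞ :=
    fun p => Set.indicator {q : ℝ × ℝ | q.2 < t*q.1} (fun q => F q.2 * K q.1) p with hG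
  have hGmeas : Measurable G := by
    apply Measurable.indicator
    · exact (hF.comp measurable_snd).mul (hK.comp measurable_fst)
    · exact measurableSet_lt measurable_snd (measurable_const.mul measurable_fst)
  have hswap := lintegral_lintegral_swap (μ := volume.restrict U)
    (ν := volume.restrict (Set.Ioi 0)) (f := fun x τ => G (x, τ))
    (hGmeas.comp measurable_id).aemeasurable
  calc ∫⁻ x in U, (∫⁻ τ in Set.Ioo 0 (t*x), F τ) * K x
      = ∫⁻ x in U, ∫⁻ τ in Set.Ioi 0, G (x, τ) := by
        refine lintegral_congr (fun x => ?_)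
        have h1 : ∀ τ : ℝ, G (x, τ) = Set.indicator (Set.Iio (t*x)) (fun τ => F τ * K x) τ := by
          intro τ
          simp only [hG, Set.indicator, Set.mem_setOf_eq, Set.mem_Iio]
        simp_rw [h1]
        rw [lintegral_indicator measurableSet_Iio, Measure.restrict_restrict measurableSet_Iio]
        have : Set.Iio (t*x) ∩ Set.Ioi 0 = Set.Ioo 0 (t*x) := by
          ext τ; simp [Set.mem_Ioo, and_comm]
        rw [this, ← lintegral_mul_const _ hF]
    _ = ∫⁻ τ in Set.Ioi 0, ∫⁻ x in U, G (x, τ) := hswap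
    _ = ∫⁻ τ in Set.Ioi 0, F τ * ∫⁻ x in Set.Ioi (τ/t) ∩ U, K x := by
        refine lintegral_congr (fun τ => ?_)
        have h1 : ∀ x : ℝ, G (x, τ) = Set.indicator (Set.Ioi (τ/t)) (fun x => F τ * K x) x := by
          intro x
          have : τ < t*x ↔ τ/t < x := by
            rw [div_lt_iff₀ ht, mul_comm]
          simp only [hG, Set.indicator, Set.mem_setOf_eq, Set.mem_Ioi, this]
        simp_rw [h1]
        rw [lintegral_indicator measurableSet_Ioi, Measure.restrict_restrict measurableSet_Ioi,
          lintegral_const_mul _ hK]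

lemma aux_deriv_pow (m : ℕ) (hm : 1 ≤ m) (x : ℝ) :
    HasDerivAt (fun x : ℝ => -(1-x^2)^m / (2*m)) ((1-x^2)^(m-1) * x) x := by
  have h1 : HasDerivAt (fun x : ℝ => 1 - x^2) (-(2*x)) x := by
    simpa using ((hasDerivAt_pow 2 x).const_sub 1)
  have h2 := h1.pow m
  have h3 := (h2.neg).div_const (2*(m:ℝ))
  refine h3.congr_deriv ?_
  have hm0 : (m:ℝ) ≠ 0 := Nat.cast_ne_zero.2 (by omega)
  field_simp

lemma aux_ftc1 (m : ℕ) (hm : 1 ≤ m) (c : ℝ) (hc : 0 ≤ c) (hc1 : c ≤ 1) :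
    ∫ x in Set.Ioo c 1, (1-x^2)^(m-1) * x = (1-c^2)^m / (2*m) := by
  have hcont : ContinuousOn (fun x : ℝ => (1-x^2)^(m-1) * x) (Set.uIcc c 1) := by fun_prop
  have hint : IntervalIntegrable (fun x : ℝ => (1-x^2)^(m-1) * x) volume c 1 :=
    hcont.intervalIntegrable
  have := intervalIntegral.integral_eq_sub_of_hasDerivAt
    (f := fun x : ℝ => -(1-x^2)^m / (2*m)) (f' := fun x : ℝ => (1-x^2)^(m-1) * x)
    (fun x _ => aux_deriv_pow m hm x) hint
  rw [intervalIntegral.integral_of_le hc1, integral_Ioc_eq_integral_Ioo] at this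
  rw [this]
  rw [show ((1:ℝ)-1^2) = 0 by ring, zero_pow (by omega : m ≠ 0)]
  ring

lemma aux_ftc1_lint (m : ℕ) (hm : 1 ≤ m) (c : ℝ) (hc : 0 ≤ c) (hc1 : c ≤ 1) :
    ∫⁻ x in Set.Ioo c 1, ENNReal.ofReal ((1-x^2)^(m-1) * x)
      = ENNReal.ofReal ((1-c^2)^m / (2*m)) := by
  rw [← aux_ftc1 m hm c hc hc1]
  rw [← ofReal_integral_eq_lintegral_ofReal]
  · have hcont : ContinuousOn (fun x : ℝ => (1-x^2)^(m-1) * x) (Set.uIcc c 1) := by fun_prop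
    exact (intervalIntegrable_iff_integrableOn_Ioo_of_le hc1).1 hcont.intervalIntegrable
  · filter_upwards [ae_restrict_mem measurableSet_Ioo] with x hx
    have h1 : (0:ℝ) ≤ 1 - x^2 := by nlinarith [hx.1, hx.2, hc]
    have h2 : (0:ℝ) ≤ x := le_trans hc (le_of_lt hx.1)
    exact mul_nonneg (pow_nonneg h1 _) h2

lemma aux_W (l : ℝ) (hl : 0 < l) (τ : ℝ) (hτ : 0 < τ) :
    IntegrableOn (fun t : ℝ => t ^ (2*l-1) / (1 + t ^ (2*l))^2) (Set.Ioi τ)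
    ∧ ∫ t in Set.Ioi τ, t ^ (2*l-1) / (1 + t ^ (2*l))^2 = 1 / (2*l*(1 + τ ^ (2*l))) := by
  set g : ℝ → ℝ := fun t => -(1/(2*l)) * (1 + t ^ (2*l))⁻¹ with hg
  have hderiv : ∀ x ∈ Set.Ici τ, HasDerivAt g (x ^ (2*l-1) / (1 + x ^ (2*l))^2) x := by
    intro x hx
    have hx0 : 0 < x := lt_of_lt_of_le hτ hx
    have h1 : HasDerivAt (fun t : ℝ => t ^ (2*l)) (2*l * x ^ (2*l-1)) x := by
      simpa using (Real.hasDerivAt_rpow_const (p := 2*l) (Or.inl (ne_of_gt hx0)))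
    have h2 : HasDerivAt (fun t : ℝ => 1 + t ^ (2*l)) (2*l * x ^ (2*l-1)) x := by
      simpa using h1.const_add 1
    have hne : (1 + x ^ (2*l)) ≠ 0 := by positivity
    have h3 := (h2.inv hne).const_mul (-(1/(2*l)))
    refine h3.congr_deriv ?_
    have hl2 : (2*l) ≠ 0 := by positivity
    field_simp
  have hpos : ∀ x ∈ Set.Ioi τ, 0 ≤ x ^ (2*l-1) / (1 + x ^ (2*l))^2 := by
    intro x hx
    have hx0 : 0 < x := lt_trans hτ hx
    positivity
  have htend : Tendsto g atTop (nhds 0) := by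
    have h1 : Tendsto (fun t : ℝ => t ^ (2*l)) atTop atTop :=
      tendsto_rpow_atTop (by linarith : (0:ℝ) < 2*l)
    have h2 : Tendsto (fun t : ℝ => 1 + t ^ (2*l)) atTop atTop :=
      tendsto_atTop_add_const_left _ 1 h1
    have h3 : Tendsto (fun t : ℝ => (1 + t ^ (2*l))⁻¹) atTop (nhds 0) := h2.inv_tendsto_atTop
    have h4 := h3.const_mul (-(1/(2*l)))
    rw [mul_zero] at h4
    exact h4
  constructor
  · exact integrableOn_Ioi_deriv_of_nonneg
      ((hderiv τ Set.self_mem_Ici).continuousAt.continuousWithinAt)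
      (fun x hx => hderiv x (Set.mem_Ici.2 (le_of_lt hx))) hpos htend
  · rw [integral_Ioi_of_hasDerivAt_of_nonneg
      ((hderiv τ Set.self_mem_Ici).continuousAt.continuousWithinAt)
      (fun x hx => hderiv x (Set.mem_Ici.2 (le_of_lt hx))) hpos htend]
    simp only [hg]
    have hne : (1 + τ ^ (2*l)) ≠ 0 := by positivity
    field_simp
    ring

lemma aux_W_lint (l : ℝ) (hl : 0 < l) (τ : ℝ) (hτ : 0 < τ) :
    ∫⁻ t in Set.Ioi τ, ENNReal.ofReal (t ^ (2*l-1) / (1 + t ^ (2*l))^2)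
      = ENNReal.ofReal (1 / (2*l*(1 + τ ^ (2*l)))) := by
  obtain ⟨hint, heq⟩ := aux_W l hl τ hτ
  rw [← heq, ← ofReal_integral_eq_lintegral_ofReal hint]
  filter_upwards [ae_restrict_mem measurableSet_Ioi] with x hx
  have hx0 : 0 < x := lt_trans hτ hx
  positivity

end Aux

open scoped ENNReal

set_option maxHeartbeats 1000000 in
theorem stmt_10 (n : ℕ) (hn : 2 ≤ n) (a : ℝ) (ha : 1/2 < a) (l : ℝ) (hl : l = 2 * a)
    (hconj2 : ∀ h : ℝ → ℝ,
      (∀ t ≥ (0:ℝ), 0 ≤ h t) →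
      MonotoneOn h (Set.Ici 0) →
      (∀ t ≥ (0:ℝ), ∫ x in (0:ℝ)..1, (h (t * x) / x) * (1 - x) ^ (n - 1) ≤ t ^ a) →
      ∫ t in Set.Ioi (0:ℝ), (h t / t) * (1 / (1 + t ^ (2*a))) ≤
        (Real.pi / 2) * ∏ k ∈ Finset.Icc 1 (n-1), (1 + a / (k:ℝ))) :
    ∀ S s : ℝ → ℝ,
      (∀ x ≥ (0:ℝ), 0 ≤ S x) →
      MonotoneOn S (Set.Ici 0) →
      ConvexOn ℝ Set.univ (fun x : ℝ => S (Real.exp x)) →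
      S 0 = 0 →
      MonotoneOn s (Set.Ici 0) →
      (∀ t ≥ (0:ℝ), 0 ≤ s t) →
      (∀ x ≥ (0:ℝ), S x = ∫ τ in (0:ℝ)..x, s τ / τ) →
      (∀ t ≥ (0:ℝ), ∫ x in (0:ℝ)..1, S (t * x) * (1 - x^2) ^ (n - 2) * x ≤ t ^ l) →
      ∫ t in Set.Ioi (0:ℝ), S t * t ^ (2*l - 1) / (1 + t ^ (2*l))^2 ≤
        (Real.pi * (n - 1) / (2 * l)) *
          ∏ k ∈ Finset.Icc 1 (n-1), (1 + l / (2 * (k:ℝ))) := by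
  intro S s hS0 hSmono _hSconv hS00 hsmono hs0 hSrep hprem
  have hnR : (2:ℝ) ≤ (n:ℝ) := by exact_mod_cast hn
  have hn1 : (0:ℝ) < (n:ℝ) - 1 := by linarith
  have ha0 : (0:ℝ) < a := by linarith
  have hl0 : (0:ℝ) < l := by rw [hl]; linarith
  -- measurable monotone versions
  set s' : ℝ → ℝ := fun x => s (max x 0) with hs'def
  have hs'mono : Monotone s' := fun x y hxy =>
    hsmono (Set.mem_Ici.2 (le_max_right x 0)) (Set.mem_Ici.2 (le_max_right y 0))
      (max_le_max hxy le_rfl)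
  have hs'meas : Measurable s' := hs'mono.measurable
  have hs'nonneg : ∀ x, 0 ≤ s' x := fun x => hs0 _ (le_max_right x 0)
  have hs'eq : ∀ x : ℝ, 0 ≤ x → s' x = s x := fun x hx => by
    simp only [hs'def, max_eq_left hx]
  set Sm : ℝ → ℝ := fun x => S (max x 0) with hSmdef
  have hSmmono : Monotone Sm := fun x y hxy =>
    hSmono (Set.mem_Ici.2 (le_max_right x 0)) (Set.mem_Ici.2 (le_max_right y 0))
      (max_le_max hxy le_rfl)
  have hSmmeas : Measurable Sm := hSmmono.measurable
  have hSmeq : ∀ x : ℝ, 0 ≤ x → Sm x = S x := fun x hx => by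
    simp only [hSmdef, max_eq_left hx]
  set F : ℝ → ℝ≥0∞ := fun τ => ENNReal.ofReal (s' τ / τ) with hFdef
  have hFmeas : Measurable F := (hs'meas.div measurable_id).ennreal_ofReal
  -- RHS nonneg
  have hprodpos : (0:ℝ) < ∏ k ∈ Finset.Icc 1 (n-1), (1 + l / (2 * (k:ℝ))) := by
    apply Finset.prod_pos
    intro k hk
    have hk1 : 1 ≤ k := (Finset.mem_Icc.1 hk).1
    have : (0:ℝ) < (k:ℝ) := by exact_mod_cast hk1
    positivity
  have hRHS0 : (0:ℝ) ≤ (Real.pi * ((n:ℝ) - 1) / (2 * l)) *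
      ∏ k ∈ Finset.Icc 1 (n-1), (1 + l / (2 * (k:ℝ))) := by
    apply mul_nonneg _ hprodpos.le
    have := Real.pi_pos
    positivity
  -- a.e.-measurable version of integrand bound for case analysis
  have hsmeasIoi : ∀ (U : Set ℝ), MeasurableSet U → U ⊆ Set.Ioi 0 →
      AEStronglyMeasurable (fun τ => s τ / τ) (volume.restrict U) := by
    intro U hUm hU
    refine ((hs'meas.div measurable_id).aestronglyMeasurable).restrict.congr ?_
    filter_upwards [ae_restrict_mem hUm] with τ hτ
    simp only [Pi.div_apply, id_eq, hs'eq τ (le_of_lt (hU hτ))]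
  by_cases hA : (∫⁻ τ in Set.Ioo (0:ℝ) 1, F τ) = ⊤
  · -- degenerate case: S vanishes identically
    have hSzero : ∀ x : ℝ, 0 < x → S x = 0 := by
      intro x hx
      rw [hSrep x hx.le, intervalIntegral.integral_of_le hx.le]
      apply integral_undef
      intro hcon
      have hcon' : IntegrableOn (fun τ => s τ / τ) (Set.Ioc 0 x) := hcon
      set c : ℝ := min x 1 with hc
      have hc0 : 0 < c := lt_min hx zero_lt_one
      have hc1 : c ≤ 1 := min_le_right x 1
      have hIoo : IntegrableOn (fun τ => s τ / τ) (Set.Ioo 0 c) :=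
        hcon'.mono_set (fun τ hτ => ⟨hτ.1, le_trans hτ.2.le (min_le_left x 1)⟩)
      have hIco : IntegrableOn (fun τ => s τ / τ) (Set.Ico c 1) := by
        refine Integrable.mono' (g := fun _ => s' 1 / c) ?_ ?_ ?_
        · exact integrableOn_const measure_Ico_lt_top.ne
        · exact hsmeasIoi (Set.Ico c 1) measurableSet_Ico
            (fun τ hτ => lt_of_lt_of_le hc0 hτ.1)
        · filter_upwards [ae_restrict_mem measurableSet_Ico] with τ hτ
          have hτ0 : 0 < τ := lt_of_lt_of_le hc0 hτ.1
          have h1 : s τ = s' τ := (hs'eq τ hτ0.le).symm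
          have h2 : 0 ≤ s' τ := hs'nonneg τ
          have h3 : s' τ ≤ s' 1 := hs'mono (le_of_lt hτ.2)
          rw [Real.norm_eq_abs, h1, abs_of_nonneg (by positivity)]
          exact div_le_div₀ (hs'nonneg 1) h3 hc0 hτ.1
      have hInt : IntegrableOn (fun τ => s τ / τ) (Set.Ioo 0 1) := by
        have hu : Set.Ioo (0:ℝ) c ∪ Set.Ico c 1 = Set.Ioo 0 1 :=
          Set.Ioo_union_Ico_eq_Ioo hc0 hc1
        have := hIoo.union hIco
        rwa [hu] at this
      -- contradiction with hA
      have hfin : (∫⁻ τ in Set.Ioo (0:ℝ) 1, F τ) < ⊤ := by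
        have heq : (∫⁻ τ in Set.Ioo (0:ℝ) 1, F τ)
            = ∫⁻ τ in Set.Ioo (0:ℝ) 1, ENNReal.ofReal (s τ / τ) := by
          apply setLIntegral_congr_fun measurableSet_Ioo
          intro τ hτ
          beta_reduce
          simp only [hFdef, hs'eq τ hτ.1.le]
        rw [heq]
        refine (hasFiniteIntegral_iff_ofReal ?_).1 hInt.2
        filter_upwards [ae_restrict_mem measurableSet_Ioo] with τ hτ
        have h1 : 0 ≤ s τ := hs0 τ hτ.1.le
        have h2 : 0 < τ := hτ.1
        positivity
      exact absurd hA hfin.ne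
    calc ∫ t in Set.Ioi (0:ℝ), S t * t ^ (2*l - 1) / (1 + t ^ (2*l))^2
        = ∫ t in Set.Ioi (0:ℝ), (0:ℝ) := by
          apply setIntegral_congr_fun measurableSet_Ioi
          intro t ht
          simp only [hSzero t ht, zero_mul, zero_div]
      _ = 0 := by simp
      _ ≤ _ := hRHS0
  -- Main case: s τ / τ is locally integrable near 0
  have hBfin : ∀ x : ℝ, 0 < x → (∫⁻ τ in Set.Ioo 0 x, F τ) ≠ ⊤ := by
    intro x hx
    rcases le_or_gt x 1 with hle | hlt
    · exact ne_top_of_le_ne_top hA (lintegral_mono_set (Set.Ioo_subset_Ioo_right hle))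
    · have hu : Set.Ioo (0:ℝ) 1 ∪ Set.Ico 1 x = Set.Ioo 0 x :=
        Set.Ioo_union_Ico_eq_Ioo zero_lt_one hlt.le
      have hdisj : Disjoint (Set.Ioo (0:ℝ) 1) (Set.Ico 1 x) := by
        apply Set.disjoint_left.2
        intro τ h1 h2
        exact absurd h2.1 (not_le.2 h1.2)
      rw [← hu, lintegral_union measurableSet_Ico hdisj]
      have h2 : (∫⁻ τ in Set.Ico (1:ℝ) x, F τ) ≤ ENNReal.ofReal (s' x) * volume (Set.Ico (1:ℝ) x) := by
        have h0 : ∀ τ ∈ Set.Ico (1:ℝ) x, F τ ≤ ENNReal.ofReal (s' x) := ?_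
        · have := setLIntegral_mono' (μ := volume) (s := Set.Ico (1:ℝ) x)
            (g := fun _ => ENNReal.ofReal (s' x)) measurableSet_Ico (f := F) h0
          simpa [setLIntegral_const] using this
        · intro τ hτ
          apply ENNReal.ofReal_le_ofReal
          calc s' τ / τ ≤ s' τ := div_le_self (hs'nonneg τ) hτ.1
            _ ≤ s' x := hs'mono (le_of_lt hτ.2)
      apply ENNReal.add_ne_top.2
      constructor
      · exact hA
      · exact (lt_of_le_of_lt h2 (ENNReal.mul_lt_top ENNReal.ofReal_lt_top
          measure_Ico_lt_top)).ne
  have hK0 : ∀ x : ℝ, 0 < x → ENNReal.ofReal (S x) = ∫⁻ τ in Set.Ioo 0 x, F τ := by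
    intro x hx
    have h1 : S x = ∫ τ in Set.Ioo 0 x, s τ / τ := by
      rw [hSrep x hx.le, intervalIntegral.integral_of_le hx.le, integral_Ioc_eq_integral_Ioo]
    have h2 : S x = ∫ τ in Set.Ioo 0 x, s' τ / τ := by
      rw [h1]
      apply setIntegral_congr_fun measurableSet_Ioo
      intro τ hτ
      show s τ / τ = s' τ / τ
      rw [hs'eq τ hτ.1.le]
    have h3 : ∫ τ in Set.Ioo 0 x, s' τ / τ = (∫⁻ τ in Set.Ioo 0 x, F τ).toReal := by
      rw [integral_eq_lintegral_of_nonneg_ae]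
      · filter_upwards [ae_restrict_mem measurableSet_Ioo] with τ hτ
        exact div_nonneg (hs'nonneg τ) hτ.1.le
      · exact ((hs'meas.div measurable_id).aestronglyMeasurable).restrict
    rw [h2, h3, ENNReal.ofReal_toReal (hBfin x hx)]
  have hs00 : s 0 = 0 := by
    by_contra hne
    have hpos : 0 < s 0 := lt_of_le_of_ne (hs0 0 le_rfl) (Ne.symm hne)
    have hlow : ∀ τ ∈ Set.Ioo (0:ℝ) 1, ENNReal.ofReal (s 0 * τ⁻¹) ≤ F τ := by
      intro τ hτ
      apply ENNReal.ofReal_le_ofReal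
      have h1 : s 0 ≤ s' τ := by
        have := hs'mono (le_of_lt hτ.1 : (0:ℝ) ≤ τ)
        rwa [hs'eq 0 le_rfl] at this
      rw [div_eq_mul_inv]
      exact mul_le_mul_of_nonneg_right h1 (inv_nonneg.2 hτ.1.le)
    have hinf : (∫⁻ τ in Set.Ioo (0:ℝ) 1, ENNReal.ofReal (s 0 * τ⁻¹)) = ⊤ := by
      by_contra hfin2
      have hint : IntegrableOn (fun τ => s 0 * τ⁻¹) (Set.Ioo (0:ℝ) 1) := by
        constructor
        · exact (measurable_const.mul measurable_inv).aestronglyMeasurable.restrict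
        · apply (hasFiniteIntegral_iff_ofReal ?_).2 (lt_top_iff_ne_top.2 hfin2)
          filter_upwards [ae_restrict_mem measurableSet_Ioo] with τ hτ
          have := hτ.1
          positivity
      have h4 := hint.const_mul (s 0)⁻¹
      have h5 : (fun τ : ℝ => (s 0)⁻¹ * (s 0 * τ⁻¹)) = fun τ : ℝ => τ⁻¹ := by
        funext τ
        field_simp
      rw [h5] at h4
      have h6 : IntegrableOn (fun τ : ℝ => τ ^ (-1:ℝ)) (Set.Ioo (0:ℝ) 1) := by
        apply IntegrableOn.congr_fun h4 ?_ measurableSet_Ioo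
        intro τ hτ
        show τ⁻¹ = τ ^ (-1:ℝ)
        rw [Real.rpow_neg_one]
      have := (intervalIntegral.integrableOn_Ioo_rpow_iff zero_lt_one).1 h6
      linarith
    exact hA (top_le_iff.1 (hinf ▸ setLIntegral_mono' measurableSet_Ioo hlow))
  set K : ℝ → ℝ≥0∞ := fun x => ENNReal.ofReal ((1-x^2)^(n-2) * x) with hKdef
  have hKmeas : Measurable K :=
    (((continuous_const.sub (continuous_pow 2)).pow _).mul continuous_id).measurable.ennreal_ofReal
  have hn2 : (1:ℕ) ≤ n - 1 := by omega
  have hncast : ((n - 1 : ℕ) : ℝ) = (n:ℝ) - 1 := by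
    rw [Nat.cast_sub (by omega), Nat.cast_one]
  have hn12 : n - 1 - 1 = n - 2 := by omega
  -- the transferred function for Conjecture 2
  set h : ℝ → ℝ := fun y => s' (Real.sqrt y) / (4*((n:ℝ)-1)) with hhdef
  have hh1 : ∀ t ≥ (0:ℝ), 0 ≤ h t := fun t _ => div_nonneg (hs'nonneg _) (by positivity)
  have hh2 : MonotoneOn h (Set.Ici 0) := by
    intro x _ y _ hxy
    have h1 := hs'mono (Real.sqrt_le_sqrt hxy)
    exact div_le_div_of_nonneg_right h1 (by positivity)
  have hh0 : h 0 = 0 := by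
    simp only [hhdef, Real.sqrt_zero, hs'eq 0 le_rfl, hs00, zero_div]
  -- key identity: Tonelli for the premise integrals
  have hTon1 : ∀ t : ℝ, 0 < t →
      ∫⁻ x in Set.Ioo (0:ℝ) 1, ENNReal.ofReal (S (t*x) * ((1-x^2)^(n-2) * x))
        = ∫⁻ τ in Set.Ioo 0 t, F τ *
            ENNReal.ofReal ((1-(τ/t)^2)^(n-1) / (2*((n:ℝ)-1))) := by
    intro t ht0
    have step1 : ∫⁻ x in Set.Ioo (0:ℝ) 1, ENNReal.ofReal (S (t*x) * ((1-x^2)^(n-2) * x))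
        = ∫⁻ x in Set.Ioo (0:ℝ) 1, (∫⁻ τ in Set.Ioo 0 (t*x), F τ) * K x := by
      apply setLIntegral_congr_fun measurableSet_Ioo
      intro x hx
      beta_reduce
      have htx : 0 < t*x := mul_pos ht0 hx.1
      rw [ENNReal.ofReal_mul (hS0 _ htx.le), hK0 (t*x) htx]
    rw [step1, tonelli_aux F K hFmeas hKmeas t ht0 (Set.Ioo 0 1)]
    have hsplit : Set.Ioi (0:ℝ) = Set.Ioo 0 t ∪ Set.Ici t := by
      ext τ
      simp only [Set.mem_Ioi, Set.mem_union, Set.mem_Ioo, Set.mem_Ici]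
      constructor
      · intro hτ
        rcases lt_or_ge τ t with h1 | h1
        · exact Or.inl ⟨hτ, h1⟩
        · exact Or.inr h1
      · rintro (⟨h1, _⟩ | h1)
        · exact h1
        · exact lt_of_lt_of_le ht0 h1
    have hdisj : Disjoint (Set.Ioo (0:ℝ) t) (Set.Ici t) := by
      apply Set.disjoint_left.2
      intro τ h1 h2
      exact absurd h2 (not_le.2 h1.2)
    rw [hsplit, lintegral_union measurableSet_Ici hdisj]
    have hzero : ∫⁻ τ in Set.Ici t, F τ * ∫⁻ x in Set.Ioi (τ/t) ∩ Set.Ioo 0 1, K x = 0 := by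
      rw [← lintegral_zero (μ := volume.restrict (Set.Ici t))]
      apply setLIntegral_congr_fun measurableSet_Ici
      intro τ hτ
      beta_reduce
      have hge : (1:ℝ) ≤ τ/t := (one_le_div ht0).2 hτ
      have hempty : Set.Ioi (τ/t) ∩ Set.Ioo (0:ℝ) 1 = ∅ := by
        ext z
        simp only [Set.mem_inter_iff, Set.mem_Ioi, Set.mem_Ioo, Set.mem_empty_iff_false,
          iff_false, not_and]
        intro h1 h2
        linarith
      rw [hempty]
      simp
    rw [hzero, add_zero]
    apply setLIntegral_congr_fun measurableSet_Ioo
    intro τ hτ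
    beta_reduce
    have hct : 0 < τ/t := div_pos hτ.1 ht0
    have hct1 : τ/t < 1 := (div_lt_one ht0).2 hτ.2
    have hset : Set.Ioi (τ/t) ∩ Set.Ioo (0:ℝ) 1 = Set.Ioo (τ/t) 1 := by
      ext z
      simp only [Set.mem_inter_iff, Set.mem_Ioi, Set.mem_Ioo]
      constructor
      · rintro ⟨h1, _, h3⟩; exact ⟨h1, h3⟩
      · rintro ⟨h1, h2⟩; exact ⟨h1, lt_trans hct h1, h2⟩
    rw [hset]
    have := aux_ftc1_lint (n-1) hn2 (τ/t) hct.le hct1.le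
    rw [hn12, hncast] at this
    rw [hKdef]
    rw [this]
  -- boundedness of the premise lintegral
  have hBfin2 : ∀ t : ℝ, 0 < t →
      (∫⁻ x in Set.Ioo (0:ℝ) 1, ENNReal.ofReal (S (t*x) * ((1-x^2)^(n-2) * x))) ≠ ⊤ := by
    intro t ht0
    have hb : ∀ x ∈ Set.Ioo (0:ℝ) 1,
        ENNReal.ofReal (S (t*x) * ((1-x^2)^(n-2) * x)) ≤ ENNReal.ofReal (S t) := by
      intro x hx
      apply ENNReal.ofReal_le_ofReal
      have h1 : S (t*x) ≤ S t := hSmono (Set.mem_Ici.2 (mul_pos ht0 hx.1).le)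
        (Set.mem_Ici.2 ht0.le) (by nlinarith [hx.1, hx.2])
      have h2 : (0:ℝ) ≤ 1 - x^2 := by nlinarith [hx.1, hx.2]
      have h3 : (1-x^2)^(n-2) * x ≤ 1 := by
        apply mul_le_one₀ (pow_le_one₀ h2 (by nlinarith [hx.1, hx.2])) hx.1.le hx.2.le
      have h4 : (0:ℝ) ≤ (1-x^2)^(n-2) * x := mul_nonneg (pow_nonneg h2 _) hx.1.le
      calc S (t*x) * ((1-x^2)^(n-2) * x) ≤ S t * 1 :=
            mul_le_mul h1 h3 h4 (hS0 t ht0.le)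
        _ = S t := mul_one _
    have := setLIntegral_mono' (μ := volume) measurableSet_Ioo hb
    rw [setLIntegral_const] at this
    exact (lt_of_le_of_lt this (ENNReal.mul_lt_top ENNReal.ofReal_lt_top
      measure_Ioo_lt_top)).ne
  have hn1ne : ((n:ℝ) - 1) ≠ 0 := ne_of_gt hn1
  -- premise of Conjecture 2 holds for h
  have hh3 : ∀ T ≥ (0:ℝ), ∫ x in (0:ℝ)..1, (h (T * x) / x) * (1 - x) ^ (n - 1) ≤ T ^ a := by
    intro T hT
    rcases eq_or_lt_of_le hT with hT0 | hTpos
    · have hz : ∀ x : ℝ, (h (T * x) / x) * (1 - x) ^ (n - 1) = 0 := by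
        intro x
        rw [← hT0, zero_mul, hh0, zero_div, zero_mul]
      simp_rw [hz]
      rw [intervalIntegral.integral_zero, ← hT0, Real.zero_rpow (ne_of_gt ha0)]
    · set t := Real.sqrt T with htdef
      have ht0 : 0 < t := Real.sqrt_pos.2 hTpos
      have ht2 : t^2 = T := Real.sq_sqrt hTpos.le
      set P : ℝ → ℝ := fun u => (h (T * u) / u) * (1 - u) ^ (n - 1) with hPdef
      have hchain : ∫ u in Set.Ioo (0:ℝ) 1, P u
          = ∫ τ in Set.Ioo 0 t, (s' τ / τ) * ((1-(τ/t)^2)^(n-1) / (2*((n:ℝ)-1))) := by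
        set Q : ℝ → ℝ := fun x => (s' (t*x) / x) * ((1 - x^2)^(n-1) / (2*((n:ℝ)-1))) with hQdef
        have hsub1 : ∫ u in Set.Ioo (0:ℝ) 1, P u = ∫ x in Set.Ioo (0:ℝ) 1, |2*x| * P (x^2) := by
          conv_lhs => rw [← aux_image_sq_Ioo]
          exact aux_integral_sq _ measurableSet_Ioo (fun y hy => hy.1) P
        have hcongr1 : ∫ x in Set.Ioo (0:ℝ) 1, |2*x| * P (x^2)
            = ∫ x in Set.Ioo (0:ℝ) 1, Q x := by
          apply setIntegral_congr_fun measurableSet_Ioo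
          intro x hx
          show |2*x| * P (x^2) = Q x
          have hx0 : 0 < x := hx.1
          have hsq : Real.sqrt (T * x^2) = t * x := by
            rw [Real.sqrt_mul hTpos.le, Real.sqrt_sq hx0.le]
          rw [hPdef, hQdef]
          simp only [hhdef, hsq]
          rw [abs_of_nonneg (by positivity : (0:ℝ) ≤ 2*x)]
          field_simp
          ring
        have hsub2 : ∫ x in Set.Ioo (0:ℝ) 1, Q x = ∫ τ in Set.Ioo 0 t, |1/t| * Q (τ/t) := by
          conv_lhs => rw [← aux_image_div_Ioo t ht0]
          exact aux_integral_div t ht0 Q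
        have hcongr2 : ∫ τ in Set.Ioo 0 t, |1/t| * Q (τ/t)
            = ∫ τ in Set.Ioo 0 t, (s' τ / τ) * ((1-(τ/t)^2)^(n-1) / (2*((n:ℝ)-1))) := by
          apply setIntegral_congr_fun measurableSet_Ioo
          intro τ hτ
          show |1/t| * Q (τ/t) = (s' τ / τ) * ((1-(τ/t)^2)^(n-1) / (2*((n:ℝ)-1)))
          have hτ0 : 0 < τ := hτ.1
          have hmul : t * (τ/t) = τ := by field_simp
          rw [hQdef]
          simp only [hmul]
          rw [abs_of_nonneg (by positivity : (0:ℝ) ≤ 1/t)]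
          field_simp
        rw [hsub1, hcongr1, hsub2, hcongr2]
      -- convert to lintegral and use Tonelli
      have hElint : ∫ τ in Set.Ioo 0 t, (s' τ / τ) * ((1-(τ/t)^2)^(n-1) / (2*((n:ℝ)-1)))
          = (∫⁻ τ in Set.Ioo 0 t, F τ *
              ENNReal.ofReal ((1-(τ/t)^2)^(n-1) / (2*((n:ℝ)-1)))).toReal := by
        rw [integral_eq_lintegral_of_nonneg_ae]
        · congr 1
          apply setLIntegral_congr_fun measurableSet_Ioo
          intro τ hτ
          beta_reduce
          rw [ENNReal.ofReal_mul (div_nonneg (hs'nonneg τ) hτ.1.le)]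
        · filter_upwards [ae_restrict_mem measurableSet_Ioo] with τ hτ
          have h1 : 0 ≤ s' τ := hs'nonneg τ
          have h2 : (0:ℝ) ≤ 1 - (τ/t)^2 := by
            have := (div_lt_one ht0).2 hτ.2
            have := div_pos hτ.1 ht0
            nlinarith
          have h3 : 0 < τ := hτ.1
          positivity
        · apply Measurable.aestronglyMeasurable
          apply (hs'meas.div measurable_id).mul
          exact ((((continuous_const.sub ((continuous_id.div_const t).pow 2)).pow
            (n-1)).div_const _)).measurable
      -- the original premise integral
      have hBeq : ∫ x in Set.Ioo (0:ℝ) 1, S (t*x) * (1-x^2)^(n-2) * x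
          = (∫⁻ x in Set.Ioo (0:ℝ) 1, ENNReal.ofReal (S (t*x) * ((1-x^2)^(n-2) * x))).toReal := by
        have hassoc : ∀ x : ℝ, S (t*x) * (1-x^2)^(n-2) * x = S (t*x) * ((1-x^2)^(n-2) * x) :=
          fun x => mul_assoc _ _ _
        simp_rw [hassoc]
        rw [integral_eq_lintegral_of_nonneg_ae]
        · filter_upwards [ae_restrict_mem measurableSet_Ioo] with x hx
          have h1 : 0 ≤ S (t*x) := hS0 _ (mul_pos ht0 hx.1).le
          have h2 : (0:ℝ) ≤ 1 - x^2 := by nlinarith [hx.1, hx.2]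
          have h3 : 0 ≤ x := hx.1.le
          positivity
        · apply AEStronglyMeasurable.congr (f := fun x => Sm (t*x) * ((1-x^2)^(n-2) * x))
          · apply Measurable.aestronglyMeasurable
            apply (hSmmeas.comp (measurable_const.mul measurable_id)).mul
            exact (((continuous_const.sub (continuous_pow 2)).pow _).mul continuous_id).measurable
          · filter_upwards [ae_restrict_mem measurableSet_Ioo] with x hx
            rw [hSmeq _ (mul_pos ht0 hx.1).le]
      have hprem' : ∫ x in Set.Ioo (0:ℝ) 1, S (t*x) * (1-x^2)^(n-2) * x ≤ t ^ l := by
        have := hprem t ht0.le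
        rwa [intervalIntegral.integral_of_le zero_le_one, integral_Ioc_eq_integral_Ioo] at this
      -- put it together
      have hTa : t ^ l = T ^ a := by
        rw [← ht2, hl, ← Real.rpow_natCast t 2, ← Real.rpow_mul ht0.le]
        norm_num
      calc ∫ x in (0:ℝ)..1, (h (T * x) / x) * (1 - x) ^ (n - 1)
          = ∫ u in Set.Ioo (0:ℝ) 1, P u := by
            rw [intervalIntegral.integral_of_le zero_le_one, integral_Ioc_eq_integral_Ioo]
        _ = (∫⁻ τ in Set.Ioo 0 t, F τ *
              ENNReal.ofReal ((1-(τ/t)^2)^(n-1) / (2*((n:ℝ)-1)))).toReal := by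
            rw [hchain, hElint]
        _ = (∫⁻ x in Set.Ioo (0:ℝ) 1, ENNReal.ofReal (S (t*x) * ((1-x^2)^(n-2) * x))).toReal := by
            rw [hTon1 t ht0]
        _ = ∫ x in Set.Ioo (0:ℝ) 1, S (t*x) * (1-x^2)^(n-2) * x := hBeq.symm
        _ ≤ t ^ l := hprem'
        _ = T ^ a := hTa
  have hJ := hconj2 h hh1 hh2 hh3
  have hl1 : (1:ℝ) < l := by rw [hl]; linarith
  set W : ℝ → ℝ := fun τ => 1 / (2*l*(1 + τ ^ (2*l))) with hWdef
  set Kw : ℝ → ℝ≥0∞ := fun x => ENNReal.ofReal (x ^ (2*l-1) / (1 + x ^ (2*l))^2) with hKwdef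
  have hKwmeas : Measurable Kw := by
    apply Measurable.ennreal_ofReal
    apply Measurable.div
    · exact (Real.continuous_rpow_const (by linarith)).measurable
    · exact ((continuous_const.add (Real.continuous_rpow_const (by linarith))).pow 2).measurable
  have hWmeas : Measurable W := by
    apply Measurable.div measurable_const
    exact (continuous_const.mul (continuous_const.add
      (Real.continuous_rpow_const (by linarith)))).measurable
  have hGlint : ∫⁻ t in Set.Ioi (0:ℝ), ENNReal.ofReal (S t * (t ^ (2*l-1) / (1 + t ^ (2*l))^2))
      = ∫⁻ τ in Set.Ioi (0:ℝ), F τ * ENNReal.ofReal (W τ) := by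
    have step1 : ∫⁻ t in Set.Ioi (0:ℝ), ENNReal.ofReal (S t * (t ^ (2*l-1) / (1 + t ^ (2*l))^2))
        = ∫⁻ t in Set.Ioi (0:ℝ), (∫⁻ τ in Set.Ioo 0 (1*t), F τ) * Kw t := by
      apply setLIntegral_congr_fun measurableSet_Ioi
      intro t ht
      beta_reduce
      rw [ENNReal.ofReal_mul (hS0 t (le_of_lt ht)), hK0 t ht, one_mul]
    rw [step1, tonelli_aux F Kw hFmeas hKwmeas 1 one_pos (Set.Ioi 0)]
    apply setLIntegral_congr_fun measurableSet_Ioi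
    intro τ hτ
    beta_reduce
    have h1 : Set.Ioi (τ/1) ∩ Set.Ioi (0:ℝ) = Set.Ioi τ := by
      rw [div_one]
      ext z
      simp only [Set.mem_inter_iff, Set.mem_Ioi]
      exact ⟨fun hz => hz.1, fun hz => ⟨hz, lt_trans hτ hz⟩⟩
    rw [h1, hKwdef]
    rw [aux_W_lint l hl0 τ hτ]
  have hLHS : ∫ t in Set.Ioi (0:ℝ), S t * t ^ (2*l - 1) / (1 + t ^ (2*l))^2
      = (∫⁻ t in Set.Ioi (0:ℝ),
          ENNReal.ofReal (S t * (t ^ (2*l-1) / (1 + t ^ (2*l))^2))).toReal := by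
    have hassoc : ∀ t : ℝ, S t * t ^ (2*l-1) / (1 + t ^ (2*l))^2
        = S t * (t ^ (2*l-1) / (1 + t ^ (2*l))^2) := fun t => mul_div_assoc _ _ _
    simp_rw [hassoc]
    rw [integral_eq_lintegral_of_nonneg_ae]
    · filter_upwards [ae_restrict_mem measurableSet_Ioi] with t ht
      have h1 : 0 ≤ S t := hS0 t (le_of_lt ht)
      have h2 : 0 ≤ t ^ (2*l-1) := Real.rpow_nonneg (le_of_lt ht) _
      have h3 : (0:ℝ) < (1 + t ^ (2*l))^2 := by
        have := Real.rpow_nonneg (le_of_lt ht : (0:ℝ) ≤ t) (2*l)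
        positivity
      positivity
    · apply AEStronglyMeasurable.congr
        (f := fun t => Sm t * (t ^ (2*l-1) / (1 + t ^ (2*l))^2))
      · apply Measurable.aestronglyMeasurable
        apply hSmmeas.mul
        apply Measurable.div
        · exact (Real.continuous_rpow_const (by linarith)).measurable
        · exact ((continuous_const.add (Real.continuous_rpow_const (by linarith))).pow
            2).measurable
      · filter_upwards [ae_restrict_mem measurableSet_Ioi] with t ht
        rw [hSmeq t (le_of_lt ht)]
  rcases eq_or_ne (∫⁻ t in Set.Ioi (0:ℝ),
      ENNReal.ofReal (S t * (t ^ (2*l-1) / (1 + t ^ (2*l))^2))) ⊤ with htop | hfin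
  · rw [hLHS, htop, ENNReal.toReal_top]
    exact hRHS0
  · -- finite case: identify the integral with Q and use hconj2
    have hQeq : ∫ τ in Set.Ioi (0:ℝ), (s' τ / τ) * W τ
        = (∫⁻ τ in Set.Ioi (0:ℝ), F τ * ENNReal.ofReal (W τ)).toReal := by
      rw [integral_eq_lintegral_of_nonneg_ae]
      · congr 1
        apply setLIntegral_congr_fun measurableSet_Ioi
        intro τ hτ
        beta_reduce
        rw [ENNReal.ofReal_mul (div_nonneg (hs'nonneg τ) (le_of_lt hτ))]
      · filter_upwards [ae_restrict_mem measurableSet_Ioi] with τ hτ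
        have h1 : 0 ≤ s' τ / τ := div_nonneg (hs'nonneg τ) (le_of_lt hτ)
        have h2 : 0 ≤ W τ := by
          have := Real.rpow_nonneg (le_of_lt hτ : (0:ℝ) ≤ τ) (2*l)
          rw [hWdef]
          positivity
        exact mul_nonneg h1 h2
      · exact ((hs'meas.div measurable_id).mul hWmeas).aestronglyMeasurable
    have hJsub : ∫ T in Set.Ioi (0:ℝ), (h T / T) * (1 / (1 + T ^ (2*a)))
        = ∫ τ in Set.Ioi (0:ℝ), (l/((n:ℝ)-1)) * ((s' τ / τ) * W τ) := by
      have h0 : ∫ T in Set.Ioi (0:ℝ), (h T / T) * (1 / (1 + T ^ (2*a)))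
          = ∫ τ in Set.Ioi (0:ℝ), |2*τ| * ((h (τ^2) / τ^2) * (1 / (1 + (τ^2) ^ (2*a)))) := by
        conv_lhs => rw [← aux_image_sq_Ioi]
        exact aux_integral_sq _ measurableSet_Ioi (fun y hy => hy) _
      rw [h0]
      apply setIntegral_congr_fun measurableSet_Ioi
      intro τ hτ
      show |2*τ| * ((h (τ^2) / τ^2) * (1 / (1 + (τ^2) ^ (2*a))))
        = (l/((n:ℝ)-1)) * ((s' τ / τ) * W τ)
      have hτ0 : (0:ℝ) < τ := hτ
      have hsq : Real.sqrt (τ^2) = τ := Real.sqrt_sq hτ0.le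
      have hrp : ((τ^2 : ℝ)) ^ (2*a) = τ ^ (2*l) := by
        rw [← Real.rpow_natCast τ 2, ← Real.rpow_mul hτ0.le, hl]
        norm_num
      rw [hhdef]
      simp only [hsq, hrp]
      rw [abs_of_nonneg (by positivity : (0:ℝ) ≤ 2*τ), hWdef]
      have hden : (0:ℝ) < 1 + τ ^ (2*l) := by
        have := Real.rpow_nonneg hτ0.le (2*l)
        positivity
      field_simp
      ring
    have hJQ : ∫ T in Set.Ioi (0:ℝ), (h T / T) * (1 / (1 + T ^ (2*a)))
        = (l/((n:ℝ)-1)) * ∫ τ in Set.Ioi (0:ℝ), (s' τ / τ) * W τ := by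
      rw [hJsub, integral_const_mul]
    have hprodeq : ∏ k ∈ Finset.Icc 1 (n-1), (1 + a / (k:ℝ))
        = ∏ k ∈ Finset.Icc 1 (n-1), (1 + l / (2 * (k:ℝ))) := by
      apply Finset.prod_congr rfl
      intro k _
      rw [hl, mul_div_mul_left a (k:ℝ) two_ne_zero]
    set Q : ℝ := ∫ τ in Set.Ioi (0:ℝ), (s' τ / τ) * W τ with hQdef
    have hJ2 : (l/((n:ℝ)-1)) * Q ≤ Real.pi / 2 * ∏ k ∈ Finset.Icc 1 (n-1), (1 + a / (k:ℝ)) := by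
      rw [← hJQ]
      exact hJ
    have hQle : Q ≤ (((n:ℝ)-1)/l) * (Real.pi / 2 * ∏ k ∈ Finset.Icc 1 (n-1), (1 + a / (k:ℝ))) := by
      have heq : Q = (((n:ℝ)-1)/l) * ((l/((n:ℝ)-1)) * Q) := by
        field_simp
      rw [heq]
      exact mul_le_mul_of_nonneg_left hJ2 (by positivity)
    calc ∫ t in Set.Ioi (0:ℝ), S t * t ^ (2*l - 1) / (1 + t ^ (2*l))^2
        = Q := by rw [hLHS, hGlint, ← hQeq]
      _ ≤ (((n:ℝ)-1)/l) * (Real.pi / 2 * ∏ k ∈ Finset.Icc 1 (n-1), (1 + a / (k:ℝ))) := hQle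
      _ = (Real.pi * ((n:ℝ) - 1) / (2 * l)) *
          ∏ k ∈ Finset.Icc 1 (n-1), (1 + l / (2 * (k:ℝ))) := by
          rw [hprodeq]
          ring
end

section
/- Conjecture 3 implies Conjecture 2 for continuously differentiable h: fix n ≥ 2 and α > 1/2, and suppose that for every nonnegative continuous q on [0,∞), the condition ∫₀¹ (∫ₓ¹ (1-y)^{n-1}/y dy) q(tx) dx ≤ t^{α-1} for all t > 0 implies ∫₀^∞ q(t) ln(1 + t^{-2α}) dt ≤ πα ∏_{k=1}^{n-1}(1+α/k). Then for every increasing continuously differentiable h ≥ 0 on [0,∞) with h(0)=0, the condition ∫₀¹ (h(tx)/x)(1-x)^{n-1} dx ≤ t^α for all t ≥ 0 implies ∫₀^∞ (h(t)/t) dt/(1+t^{2α}) ≤ (π/2) ∏_{k=1}^{n-1}(1+α/k). -/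
open Real MeasureTheory Finset
open Filter Topology ENNReal

lemma swap_aux (f g : ℝ → ℝ≥0∞) (hf : Measurable f) (hg : Measurable g)
    (S : Set ℝ) :
    ∫⁻ x in S, f x * ∫⁻ u in S ∩ {u | u ≤ x}, g u
      = ∫⁻ u in S, g u * ∫⁻ x in S ∩ {x | u ≤ x}, f x := by
  have hind : MeasurableSet {p : ℝ × ℝ | p.2 ≤ p.1} :=
    measurableSet_le measurable_snd measurable_fst
  set F : ℝ → ℝ → ℝ≥0∞ := fun x u =>
    f x * g u * ({p : ℝ × ℝ | p.2 ≤ p.1}.indicator 1 (x, u)) with hF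
  have hFm : AEMeasurable (Function.uncurry F)
      ((volume.restrict S).prod (volume.restrict S)) := by
    apply Measurable.aemeasurable
    exact ((hf.comp measurable_fst).mul (hg.comp measurable_snd)).mul
      (measurable_one.indicator hind)
  have key1 : ∀ x : ℝ, ∫⁻ u in S, F x u = f x * ∫⁻ u in S ∩ Set.Iic x, g u := by
    intro x
    have : ∀ u : ℝ, F x u = f x * (Set.Iic x).indicator g u := by
      intro u
      by_cases hu : u ≤ x
      · simp [hF, Set.indicator_of_mem, hu, Set.mem_Iic.mpr hu,
          Set.indicator_of_mem (show (x,u) ∈ {p : ℝ × ℝ | p.2 ≤ p.1} from hu), mul_assoc]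
      · simp [hF, Set.indicator_of_notMem, hu,
          Set.indicator_of_notMem (show (x,u) ∉ {p : ℝ × ℝ | p.2 ≤ p.1} from hu)]
    simp_rw [this]
    rw [lintegral_const_mul _ (hg.indicator measurableSet_Iic),
      lintegral_indicator measurableSet_Iic, Measure.restrict_restrict measurableSet_Iic,
      Set.inter_comm]
  have key2 : ∀ u : ℝ, ∫⁻ x in S, F x u = g u * ∫⁻ x in S ∩ Set.Ici u, f x := by
    intro u
    have : ∀ x : ℝ, F x u = g u * (Set.Ici u).indicator f x := by
      intro x
      by_cases hu : u ≤ x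
      · simp [hF, Set.indicator_of_mem, hu, Set.mem_Ici.mpr hu,
          Set.indicator_of_mem (show (x,u) ∈ {p : ℝ × ℝ | p.2 ≤ p.1} from hu)]
        ring
      · simp [hF, Set.indicator_of_notMem, hu,
          Set.indicator_of_notMem (show (x,u) ∉ {p : ℝ × ℝ | p.2 ≤ p.1} from hu)]
    simp_rw [this]
    rw [lintegral_const_mul _ (hf.indicator measurableSet_Ici),
      lintegral_indicator measurableSet_Ici, Measure.restrict_restrict measurableSet_Ici,
      Set.inter_comm]
  calc ∫⁻ x in S, f x * ∫⁻ u in S ∩ {u | u ≤ x}, g u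
      = ∫⁻ x in S, ∫⁻ u in S, F x u := by
        refine lintegral_congr fun x => ?_
        rw [key1 x]; rfl
    _ = ∫⁻ u in S, ∫⁻ x in S, F x u := lintegral_lintegral_swap hFm
    _ = ∫⁻ u in S, g u * ∫⁻ x in S ∩ {x | u ≤ x}, f x := by
        refine lintegral_congr fun u => ?_
        rw [key2 u]; rfl

lemma deriv_nonneg_of_monotoneOn {h : ℝ → ℝ} (hmono : MonotoneOn h (Set.Ici 0))
    (hC : ContDiff ℝ 1 h) : ∀ t ≥ (0:ℝ), 0 ≤ deriv h t := by
  intro t ht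
  have hd : HasDerivAt h (deriv h t) t := (hC.differentiable one_ne_zero t).hasDerivAt
  rw [hasDerivAt_iff_tendsto_slope] at hd
  have hle : 𝓝[>] t ≤ 𝓝[≠] t := nhdsWithin_mono t fun y hy => ne_of_gt hy
  refine ge_of_tendsto (hd.mono_left hle) ?_
  filter_upwards [self_mem_nhdsWithin] with y hy
  have hy' : t < y := hy
  have : h t ≤ h y := hmono ht (le_trans ht hy'.le) hy'.le
  have hpos : 0 < y - t := by linarith
  rw [slope_def_field]
  exact div_nonneg (by linarith) hpos.le

lemma log_deriv_aux {a : ℝ} (ha : 0 < a) {s : ℝ} (hs : 0 < s) :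
    HasDerivAt (fun u : ℝ => -Real.log (1 + u ^ (-(2*a))))
      (2*a/(s*(1+s^(2*a)))) s := by
  have h1 : HasDerivAt (fun u : ℝ => u ^ (-(2*a))) (-(2*a) * s ^ (-(2*a) - 1)) s :=
    Real.hasDerivAt_rpow_const (Or.inl hs.ne')
  have h2 : HasDerivAt (fun u : ℝ => 1 + u ^ (-(2*a))) (-(2*a) * s ^ (-(2*a) - 1)) s :=
    h1.const_add 1
  have hpos : 0 < 1 + s ^ (-(2*a)) := by positivity
  have h3 : HasDerivAt (fun u : ℝ => Real.log (1 + u ^ (-(2*a))))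
      ((-(2*a) * s ^ (-(2*a) - 1)) / (1 + s ^ (-(2*a)))) s := by
    have := (Real.hasDerivAt_log hpos.ne').comp s h2
    simpa [div_eq_inv_mul, mul_comm, Function.comp_def] using this
  have h4 := h3.neg
  refine h4.congr_deriv ?_
  have hs2a : (0:ℝ) < s ^ (2*a) := Real.rpow_pos_of_pos hs _
  have e1 : s ^ (-(2*a)) = (s ^ (2*a))⁻¹ := Real.rpow_neg hs.le _
  have e2 : s ^ (-(2*a) - 1) = (s ^ (2*a) * s)⁻¹ := by
    rw [show -(2*a) - 1 = -(2*a + 1) by ring, Real.rpow_neg hs.le,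
      Real.rpow_add hs, Real.rpow_one]
  rw [e1, e2]
  field_simp
  ring

lemma log_eq_integral_aux {a : ℝ} (ha : 0 < a) {t : ℝ} (ht : 0 < t) :
    Real.log (1 + t ^ (-(2*a))) = ∫ s in Set.Ioi t, 2*a/(s*(1+s^(2*a)))
      ∧ IntegrableOn (fun s => 2*a/(s*(1+s^(2*a)))) (Set.Ioi t) := by
  have hcont : ContinuousWithinAt (fun u : ℝ => -Real.log (1 + u ^ (-(2*a)))) (Set.Ici t) t :=
    (log_deriv_aux ha ht).continuousAt.continuousWithinAt
  have hderiv : ∀ x ∈ Set.Ioi t, HasDerivAt (fun u : ℝ => -Real.log (1 + u ^ (-(2*a))))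
      (2*a/(x*(1+x^(2*a)))) x := fun x hx => log_deriv_aux ha (lt_trans ht hx)
  have hpos : ∀ x ∈ Set.Ioi t, 0 ≤ 2*a/(x*(1+x^(2*a)))  := by
    intro x hx
    have hx0 : 0 < x := lt_trans ht hx
    have : (0:ℝ) < x ^ (2*a) := Real.rpow_pos_of_pos hx0 _
    positivity
  have hlim : Tendsto (fun u : ℝ => -Real.log (1 + u ^ (-(2*a)))) atTop (𝓝 0) := by
    have h0 : Tendsto (fun u : ℝ => u ^ (-(2*a))) atTop (𝓝 0) :=
      tendsto_rpow_neg_atTop (by linarith)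
    have h1 : Tendsto (fun u : ℝ => 1 + u ^ (-(2*a))) atTop (𝓝 1) := by
      simpa using tendsto_const_nhds.add h0
    have h2 : Tendsto (fun u : ℝ => Real.log (1 + u ^ (-(2*a)))) atTop (𝓝 0) := by
      have := (Real.continuousAt_log (by norm_num : (1:ℝ) ≠ 0)).tendsto.comp h1
      simpa [Function.comp_def] using this
    simpa using h2.neg
  refine ⟨?_, integrableOn_Ioi_deriv_of_nonneg hcont hderiv hpos hlim⟩
  rw [integral_Ioi_of_hasDerivAt_of_nonneg hcont hderiv hpos hlim]
  simp

lemma ident1 (n : ℕ) (h q : ℝ → ℝ) (hq : Continuous q)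
    (hq0 : ∀ t ≥ (0:ℝ), 0 ≤ q t)
    (hderiv : ∀ x : ℝ, HasDerivAt h (q x) x)
    (h0 : h 0 = 0) {t : ℝ} (ht : 0 < t) :
    ∫⁻ x in Set.Ioc (0:ℝ) 1, ENNReal.ofReal ((h (t*x)/x) * (1-x)^(n-1))
      = ENNReal.ofReal t *
        ∫⁻ x in Set.Ioc (0:ℝ) 1,
          ENNReal.ofReal ((∫ y in x..(1:ℝ), (1-y)^(n-1)/y) * q (t*x)) := by
  set c : ℝ → ℝ≥0∞ := fun x => ENNReal.ofReal ((1-x)^(n-1)/x) with hc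
  set g : ℝ → ℝ≥0∞ := fun u => ENNReal.ofReal (t * q (t*u)) with hg
  have hcm : Measurable c := by fun_prop
  have hgm : Measurable g := by fun_prop
  -- FTC : h (t*x) = ∫ u in Set.Ioc 0 x, t * q (t*u)  for 0 ≤ x
  have hftc : ∀ x : ℝ, 0 ≤ x → h (t*x) = ∫ u in Set.Ioc (0:ℝ) x, t * q (t*u) := by
    intro x hx
    rw [← intervalIntegral.integral_of_le hx]
    have : ∀ u ∈ Set.uIcc (0:ℝ) x, HasDerivAt (fun u => h (t*u)) (t * q (t*u)) u := by
      intro u _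
      have h1 : HasDerivAt (fun u : ℝ => t*u) t u := by
        simpa using (hasDerivAt_id u).const_mul t
      have := (hderiv (t*u)).comp u h1
      simpa [mul_comm, Function.comp_def] using this
    rw [intervalIntegral.integral_eq_sub_of_hasDerivAt this
      ((continuous_const.mul (hq.comp (continuous_const.mul continuous_id))).intervalIntegrable 0 x)]
    simp [h0]
  -- pointwise on Set.Ioc 0 1
  have step1 : ∀ x ∈ Set.Ioc (0:ℝ) 1,
      ENNReal.ofReal ((h (t*x)/x) * (1-x)^(n-1)) = c x * ∫⁻ u in Set.Ioc (0:ℝ) x, g u := by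
    intro x hx
    have hx0 : 0 < x := hx.1
    have hx1 : x ≤ 1 := hx.2
    have hint : IntegrableOn (fun u => t * q (t*u)) (Set.Ioc (0:ℝ) x) :=
      ((continuous_const.mul (hq.comp (continuous_const.mul continuous_id))).integrableOn_Ioc)
    have hofr : ENNReal.ofReal (h (t*x)) = ∫⁻ u in Set.Ioc (0:ℝ) x, g u := by
      rw [hftc x hx0.le]
      exact ofReal_integral_eq_lintegral_ofReal hint
        ((ae_restrict_iff' measurableSet_Ioc).2 (ae_of_all _ fun u hu =>
          mul_nonneg ht.le (hq0 _ (mul_nonneg ht.le hu.1.le))))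
    have hnn : 0 ≤ (1-x)^(n-1)/x := div_nonneg (pow_nonneg (by linarith) _) hx0.le
    rw [show (h (t*x)/x) * (1-x)^(n-1) = ((1-x)^(n-1)/x) * h (t*x) by ring,
      ENNReal.ofReal_mul hnn, hofr]
  calc ∫⁻ x in Set.Ioc (0:ℝ) 1, ENNReal.ofReal ((h (t*x)/x) * (1-x)^(n-1))
      = ∫⁻ x in Set.Ioc (0:ℝ) 1, c x * ∫⁻ u in Set.Ioc (0:ℝ) 1 ∩ {u | u ≤ x}, g u := by
        refine setLIntegral_congr_fun measurableSet_Ioc (fun x hx => ?_)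
        rw [step1 x hx, show Set.Ioc (0:ℝ) 1 ∩ {u | u ≤ x} = Set.Ioc 0 x by
          ext u; simp only [Set.mem_inter_iff, Set.mem_Ioc, Set.mem_setOf_eq]
          constructor
          · rintro ⟨⟨h1, _⟩, h3⟩; exact ⟨h1, h3⟩
          · rintro ⟨h1, h2⟩; exact ⟨⟨h1, le_trans h2 hx.2⟩, h2⟩]
    _ = ∫⁻ u in Set.Ioc (0:ℝ) 1, g u * ∫⁻ x in Set.Ioc (0:ℝ) 1 ∩ {x | u ≤ x}, c x :=
        swap_aux c g hcm hgm _
    _ = ENNReal.ofReal t *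
        ∫⁻ u in Set.Ioc (0:ℝ) 1,
          ENNReal.ofReal ((∫ y in u..(1:ℝ), (1-y)^(n-1)/y) * q (t*u)) := by
        rw [← lintegral_const_mul' _ _ ENNReal.ofReal_ne_top]
        refine setLIntegral_congr_fun measurableSet_Ioc (fun u hu => ?_)
        have hu0 : 0 < u := hu.1
        have hu1 : u ≤ 1 := hu.2
        have hset : Set.Ioc (0:ℝ) 1 ∩ {x | u ≤ x} = Set.Icc u 1 := by
          ext x; simp only [Set.mem_inter_iff, Set.mem_Ioc, Set.mem_setOf_eq, Set.mem_Icc]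
          constructor
          · rintro ⟨⟨_, h2⟩, h3⟩; exact ⟨h3, h2⟩
          · rintro ⟨h1, h2⟩; exact ⟨⟨lt_of_lt_of_le hu0 h1, h2⟩, h1⟩
        have hKint : IntegrableOn (fun y => (1-y)^(n-1)/y) (Set.Ioc u 1) := by
          refine (ContinuousOn.integrableOn_Icc ?_).mono_set Set.Ioc_subset_Icc_self
          refine ContinuousOn.div (by fun_prop) continuousOn_id ?_
          intro y hy; exact (lt_of_lt_of_le hu0 hy.1).ne'
        have hK : ∫⁻ x in Set.Ioc (0:ℝ) 1 ∩ {x | u ≤ x}, c x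
            = ENNReal.ofReal (∫ y in u..(1:ℝ), (1-y)^(n-1)/y) := by
          rw [hset, ← Measure.restrict_congr_set MeasureTheory.Ioc_ae_eq_Icc,
            intervalIntegral.integral_of_le hu1]
          rw [ofReal_integral_eq_lintegral_ofReal hKint
            ((ae_restrict_iff' measurableSet_Ioc).2 (ae_of_all _ fun y hy => by
              have : 0 < y := hu0.trans hy.1
              have : (0:ℝ) ≤ 1 - y := by linarith [hy.2]
              positivity))]
        rw [hK]
        rw [← ENNReal.ofReal_mul (by positivity : (0:ℝ) ≤ t),
          ← ENNReal.ofReal_mul (mul_nonneg ht.le (hq0 _ (mul_nonneg ht.le hu0.le)))]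
        congr 1
        ring

lemma ident2 (h q : ℝ → ℝ) (hq : Continuous q)
    (hq0 : ∀ t ≥ (0:ℝ), 0 ≤ q t)
    (hderiv : ∀ x : ℝ, HasDerivAt h (q x) x)
    (h0 : h 0 = 0) {a : ℝ} (ha : 0 < a) :
    ∫⁻ t in Set.Ioi (0:ℝ), ENNReal.ofReal (q t * Real.log (1 + t ^ (-(2*a))))
      = ENNReal.ofReal (2*a) *
        ∫⁻ s in Set.Ioi (0:ℝ), ENNReal.ofReal ((h s/s) * (1/(1+s^(2*a)))) := by
  set C : ℝ → ℝ≥0∞ := fun s => ENNReal.ofReal (2*a/(s*(1+s^(2*a)))) with hC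
  set Q : ℝ → ℝ≥0∞ := fun u => ENNReal.ofReal (q u) with hQ
  have hCm : Measurable C := by
    apply Measurable.ennreal_ofReal
    apply Measurable.div measurable_const
    exact measurable_id.mul (measurable_const.add (measurable_id.pow_const _ |>.comp
      measurable_id) |>.comp measurable_id) |>.comp measurable_id |>.comp measurable_id
  have hQm : Measurable Q := hq.measurable.ennreal_ofReal
  have hftc : ∀ s : ℝ, 0 ≤ s → h s = ∫ u in Set.Ioc (0:ℝ) s, q u := by
    intro s hs
    rw [← intervalIntegral.integral_of_le hs,
      intervalIntegral.integral_eq_sub_of_hasDerivAt (fun u _ => hderiv u)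
        (hq.intervalIntegrable 0 s), h0, sub_zero]
  calc ∫⁻ t in Set.Ioi (0:ℝ), ENNReal.ofReal (q t * Real.log (1 + t ^ (-(2*a))))
      = ∫⁻ t in Set.Ioi (0:ℝ), Q t * ∫⁻ s in Set.Ioi (0:ℝ) ∩ {s | t ≤ s}, C s := by
        refine setLIntegral_congr_fun measurableSet_Ioi (fun t htpos => ?_)
        have ht0 : 0 < t := htpos
        obtain ⟨hlog, hint⟩ := log_eq_integral_aux ha ht0
        have hset : Set.Ioi (0:ℝ) ∩ {s | t ≤ s} = Set.Ici t := by
          ext s; simp only [Set.mem_inter_iff, Set.mem_Ioi, Set.mem_setOf_eq, Set.mem_Ici]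
          exact ⟨fun hs => hs.2, fun hs => ⟨lt_of_lt_of_le ht0 hs, hs⟩⟩
        have hCofr : ∫⁻ s in Set.Ioi (0:ℝ) ∩ {s | t ≤ s}, C s
            = ENNReal.ofReal (Real.log (1 + t ^ (-(2*a)))) := by
          rw [hset, ← Measure.restrict_congr_set MeasureTheory.Ioi_ae_eq_Ici, hlog]
          rw [ofReal_integral_eq_lintegral_ofReal hint
            ((ae_restrict_iff' measurableSet_Ioi).2 (ae_of_all _ fun s hs => by
              have hs0 : 0 < s := ht0.trans hs
              have h2 : (0:ℝ) < s ^ (2*a) := Real.rpow_pos_of_pos hs0 _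
              positivity))]
        rw [hCofr, ← ENNReal.ofReal_mul (hq0 _ ht0.le)]
    _ = ∫⁻ s in Set.Ioi (0:ℝ), C s * ∫⁻ t in Set.Ioi (0:ℝ) ∩ {t | t ≤ s}, Q t :=
        (swap_aux C Q hCm hQm _).symm
    _ = ENNReal.ofReal (2*a) *
        ∫⁻ s in Set.Ioi (0:ℝ), ENNReal.ofReal ((h s/s) * (1/(1+s^(2*a)))) := by
        rw [← lintegral_const_mul' _ _ ENNReal.ofReal_ne_top]
        refine setLIntegral_congr_fun measurableSet_Ioi (fun s hspos => ?_)
        have hs0 : 0 < s := hspos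
        have hset : Set.Ioi (0:ℝ) ∩ {t | t ≤ s} = Set.Ioc 0 s := by
          ext u; simp only [Set.mem_inter_iff, Set.mem_Ioi, Set.mem_setOf_eq, Set.mem_Ioc]
        have hQofr : ∫⁻ t in Set.Ioi (0:ℝ) ∩ {t | t ≤ s}, Q t = ENNReal.ofReal (h s) := by
          rw [hset, hftc s hs0.le]
          rw [ofReal_integral_eq_lintegral_ofReal (hq.integrableOn_Ioc)
            ((ae_restrict_iff' measurableSet_Ioc).2 (ae_of_all _ fun u hu => hq0 _ hu.1.le))]
        rw [hQofr]
        have h2 : (0:ℝ) < s ^ (2*a) := Real.rpow_pos_of_pos hs0 _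
        rw [← ENNReal.ofReal_mul (by positivity : (0:ℝ) ≤ 2*a/(s*(1+s^(2*a)))),
          ← ENNReal.ofReal_mul (by positivity : (0:ℝ) ≤ 2*a)]
        congr 1
        field_simp

theorem stmt_11 (n : ℕ) (hn : 2 ≤ n) (a : ℝ) (ha : 1/2 < a)
    (hconj3 : ∀ q : ℝ → ℝ,
      (∀ t ≥ (0:ℝ), 0 ≤ q t) →
      ContinuousOn q (Set.Ici 0) →
      (∀ t > (0:ℝ),
        ∫ x in (0:ℝ)..1, (∫ y in x..(1:ℝ), (1 - y) ^ (n - 1) / y) * q (t * x) ≤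
          t ^ (a - 1)) →
      ∫ t in Set.Ioi (0:ℝ), q t * Real.log (1 + t ^ (-(2*a))) ≤
        Real.pi * a * ∏ k ∈ Finset.Icc 1 (n-1), (1 + a / (k:ℝ))) :
    ∀ h : ℝ → ℝ,
      MonotoneOn h (Set.Ici 0) →
      ContDiff ℝ 1 h →
      (∀ t ≥ (0:ℝ), 0 ≤ h t) →
      h 0 = 0 →
      (∀ t ≥ (0:ℝ), ∫ x in (0:ℝ)..1, (h (t * x) / x) * (1 - x) ^ (n - 1) ≤ t ^ a) →
      ∫ t in Set.Ioi (0:ℝ), (h t / t) * (1 / (1 + t ^ (2*a))) ≤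
        (Real.pi / 2) * ∏ k ∈ Finset.Icc 1 (n-1), (1 + a / (k:ℝ)) := by
  intro h hmono hC hpos h0 hhyp
  have ha0 : 0 < a := by linarith
  set q : ℝ → ℝ := deriv h with hqdef
  have hderiv : ∀ x : ℝ, HasDerivAt h (q x) x :=
    fun x => (hC.differentiable one_ne_zero x).hasDerivAt
  have hqc : Continuous q := hC.continuous_deriv le_rfl
  have hq0 : ∀ t ≥ (0:ℝ), 0 ≤ q t := deriv_nonneg_of_monotoneOn hmono hC
  have hprod : 0 ≤ ∏ k ∈ Finset.Icc 1 (n-1), (1 + a / (k:ℝ)) := by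
    refine Finset.prod_nonneg fun k _ => ?_
    have : (0:ℝ) ≤ a / k := div_nonneg ha0.le (Nat.cast_nonneg k)
    linarith
  -- the target integrand and its measurability
  set f : ℝ → ℝ := fun s => (h s/s) * (1/(1+s^(2*a))) with hfdef
  have hfc : ContinuousOn f (Set.Ioi 0) := by
    refine ContinuousOn.mul ?_ ?_
    · exact (hC.continuous.continuousOn).div continuousOn_id (fun s hs => ne_of_gt hs)
    · refine ContinuousOn.div continuousOn_const ?_ ?_
      · refine continuousOn_const.add fun s hs => ?_
        exact (Real.continuousAt_rpow_const s _ (Or.inl (ne_of_gt hs))).continuousWithinAt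
      · intro s hs
        have : (0:ℝ) < s ^ (2*a) := Real.rpow_pos_of_pos hs _
        positivity
  have hfm : AEStronglyMeasurable f (volume.restrict (Set.Ioi (0:ℝ))) :=
    hfc.aestronglyMeasurable measurableSet_Ioi
  have hfnn : 0 ≤ᵐ[volume.restrict (Set.Ioi (0:ℝ))] f := by
    refine (ae_restrict_iff' measurableSet_Ioi).2 (ae_of_all _ fun s hs => ?_)
    have hs0 : (0:ℝ) < s := hs
    have h1 : (0:ℝ) < s ^ (2*a) := Real.rpow_pos_of_pos hs0 _
    have h2 : 0 ≤ h s := hpos s hs0.le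
    positivity
  set G : ℝ≥0∞ := ∫⁻ s in Set.Ioi (0:ℝ), ENNReal.ofReal (f s) with hGdef
  by_cases hG : G = ⊤
  · -- not integrable, integral is 0
    have hni : ¬ IntegrableOn f (Set.Ioi (0:ℝ)) := by
      intro hi
      have h1 : G ≤ ∫⁻ s in Set.Ioi (0:ℝ), (‖f s‖₊ : ℝ≥0∞) :=
        lintegral_mono fun s => Real.ofReal_le_enorm _
      exact absurd (lt_of_le_of_lt h1 hi.hasFiniteIntegral) (by simp [hG])
    rw [integral_undef hni]
    positivity
  · -- main case
    have hfi : IntegrableOn f (Set.Ioi (0:ℝ)) := by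
      refine ⟨hfm, ?_⟩
      rw [hasFiniteIntegral_iff_ofReal hfnn]
      exact lt_top_iff_ne_top.2 hG
    -- the conj3 hypothesis, pointwise in t
    have hyp1 : ∀ t > (0:ℝ),
        ∫ x in (0:ℝ)..1, (∫ y in x..(1:ℝ), (1 - y) ^ (n - 1) / y) * q (t * x) ≤
          t ^ (a - 1) := by
      intro t ht
      set K : ℝ → ℝ := fun x => ∫ y in x..(1:ℝ), (1-y)^(n-1)/y with hKdef
      have hKcont : ∀ x ∈ Set.Ioi (0:ℝ), ContinuousAt K x := by
        intro x hx
        have hx0 : (0:ℝ) < x := hx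
        have hgi : IntervalIntegrable (fun y => (1-y)^(n-1)/y) volume x 1 := by
          apply ContinuousOn.intervalIntegrable
          refine ContinuousOn.div (by fun_prop) continuousOn_id fun y hy => ?_
          rcases Set.mem_uIcc.1 hy with ⟨h1, _⟩ | ⟨h1, _⟩
          · exact (lt_of_lt_of_le hx0 h1).ne'
          · exact (lt_of_lt_of_le one_pos h1).ne'
        have hmeas : StronglyMeasurableAtFilter (fun y : ℝ => (1-y)^(n-1)/y) (𝓝 x) := by
          apply StronglyMeasurable.stronglyMeasurableAtFilter
          exact (Measurable.stronglyMeasurable (by fun_prop))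
        have hca : ContinuousAt (fun y : ℝ => (1-y)^(n-1)/y) x :=
          ContinuousAt.div (by fun_prop) continuousAt_id hx0.ne'
        exact (intervalIntegral.integral_hasDerivAt_left hgi hmeas hca).continuousAt
      have hKm : AEStronglyMeasurable (fun x => K x * q (t*x))
          (volume.restrict (Set.Ioc (0:ℝ) 1)) := by
        apply ContinuousOn.aestronglyMeasurable _ measurableSet_Ioc
        exact ContinuousOn.mul (fun x hx => (hKcont x hx.1).continuousWithinAt)
          (Continuous.continuousOn (by fun_prop))
      have hKnn : ∀ x ∈ Set.Ioc (0:ℝ) 1, 0 ≤ K x * q (t*x) := by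
        intro x hx
        refine mul_nonneg (intervalIntegral.integral_nonneg hx.2 fun y hy => ?_)
          (hq0 _ (mul_nonneg ht.le hx.1.le))
        exact div_nonneg (pow_nonneg (by linarith [hy.2]) _) (hx.1.le.trans hy.1)
      have hKnn' : 0 ≤ᵐ[volume.restrict (Set.Ioc (0:ℝ) 1)] fun x => K x * q (t*x) :=
        (ae_restrict_iff' measurableSet_Ioc).2 (ae_of_all _ hKnn)
      -- bound for r
      set r : ℝ → ℝ := fun x => (h (t*x)/x) * (1-x)^(n-1) with hrdef
      obtain ⟨u₀, hu₀mem, hu₀'⟩ := IsCompact.exists_isMaxOn isCompact_Icc (Set.nonempty_Icc.2 ht.le)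
        (hqc.continuousOn (s := Set.Icc 0 t))
      have hu₀ : ∀ u ∈ Set.Icc (0:ℝ) t, q u ≤ q u₀ := fun u hu => hu₀' hu
      have hM0 : 0 ≤ q u₀ := hq0 u₀ hu₀mem.1
      have hftc : ∀ s : ℝ, h s = ∫ u in (0:ℝ)..s, q u := by
        intro s
        rw [intervalIntegral.integral_eq_sub_of_hasDerivAt (fun u _ => hderiv u)
          (hqc.intervalIntegrable 0 s), h0, sub_zero]
      have hbound : ∀ x ∈ Set.Ioc (0:ℝ) 1, h (t*x) ≤ q u₀ * (t*x) := by
        intro x hx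
        have htx : 0 ≤ t*x := mul_nonneg ht.le hx.1.le
        have htx2 : t*x ≤ t := mul_le_of_le_one_right ht.le hx.2
        rw [hftc (t*x)]
        calc ∫ u in (0:ℝ)..(t*x), q u ≤ ∫ _u in (0:ℝ)..(t*x), q u₀ := by
              refine intervalIntegral.integral_mono_on htx (hqc.intervalIntegrable _ _)
                intervalIntegrable_const fun u hu => hu₀ u ⟨hu.1, hu.2.trans htx2⟩
          _ = q u₀ * (t*x) := by simp [mul_comm]
      have hrnn : ∀ x ∈ Set.Ioc (0:ℝ) 1, 0 ≤ r x := by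
        intro x hx
        have h1 : 0 ≤ h (t*x) := hpos _ (mul_nonneg ht.le hx.1.le)
        have h2 : (0:ℝ) ≤ 1 - x := by linarith [hx.2]
        have := hx.1
        positivity
      have hrnn' : 0 ≤ᵐ[volume.restrict (Set.Ioc (0:ℝ) 1)] r :=
        (ae_restrict_iff' measurableSet_Ioc).2 (ae_of_all _ hrnn)
      have hrint : IntegrableOn r (Set.Ioc (0:ℝ) 1) := by
        refine Integrable.mono' (g := fun _ => q u₀ * t)
          (integrableOn_const (C := q u₀ * t) measure_Ioc_lt_top.ne) ?_ ?_
        · apply ContinuousOn.aestronglyMeasurable _ measurableSet_Ioc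
          have hhc : Continuous fun x : ℝ => h (t*x) :=
            hC.continuous.comp (continuous_const.mul continuous_id)
          exact ContinuousOn.mul (ContinuousOn.div hhc.continuousOn
            continuousOn_id fun x hx => hx.1.ne') (Continuous.continuousOn (by fun_prop))
        · refine (ae_restrict_iff' measurableSet_Ioc).2 (ae_of_all _ fun x hx => ?_)
          rw [Real.norm_eq_abs, abs_of_nonneg (hrnn x hx)]
          have hx0 : (0:ℝ) < x := hx.1
          have hx1 : x ≤ 1 := hx.2
          have hb1 : h (t*x)/x ≤ q u₀ * t := by
            rw [div_le_iff₀ hx0]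
            calc h (t*x) ≤ q u₀ * (t*x) := hbound x hx
              _ = q u₀ * t * x := by ring
          have hb2 : (1-x)^(n-1) ≤ 1 := pow_le_one₀ (by linarith) (by linarith)
          have hb3 : (0:ℝ) ≤ (1-x)^(n-1) := pow_nonneg (by linarith) _
          have hb4 : 0 ≤ h (t*x)/x := div_nonneg (hpos _ (mul_nonneg ht.le hx0.le)) hx0.le
          calc (h (t*x)/x) * (1-x)^(n-1) ≤ (q u₀ * t) * 1 :=
                mul_le_mul hb1 hb2 hb3 (by positivity)
            _ = q u₀ * t := mul_one _
      -- lintegral chain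
      have hid1 := ident1 n h q hqc hq0 hderiv h0 ht
      set A : ℝ≥0∞ := ∫⁻ x in Set.Ioc (0:ℝ) 1, ENNReal.ofReal (K x * q (t*x)) with hAdef
      have hBle : (∫⁻ x in Set.Ioc (0:ℝ) 1, ENNReal.ofReal (r x))
          ≤ ENNReal.ofReal t * ENNReal.ofReal (t^(a-1)) := by
        rw [← ofReal_integral_eq_lintegral_ofReal hrint hrnn',
          ← ENNReal.ofReal_mul ht.le]
        apply ENNReal.ofReal_le_ofReal
        have hta : t * t^(a-1) = t^a := by
          rw [mul_comm, ← Real.rpow_add_one ht.ne']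
          ring_nf
        rw [hta, ← intervalIntegral.integral_of_le zero_le_one]
        exact hhyp t ht.le
      have hAle : A ≤ ENNReal.ofReal (t^(a-1)) := by
        have h1 : ENNReal.ofReal t * A ≤ ENNReal.ofReal t * ENNReal.ofReal (t^(a-1)) := by
          rw [← hid1]; exact hBle
        exact (ENNReal.mul_le_mul_iff_right (by simpa using ht) ENNReal.ofReal_ne_top).1 h1
      have hAne : A ≠ ⊤ := ne_top_of_le_ne_top ENNReal.ofReal_ne_top hAle
      have hKint : IntegrableOn (fun x => K x * q (t*x)) (Set.Ioc (0:ℝ) 1) := by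
        refine ⟨hKm, ?_⟩
        rw [hasFiniteIntegral_iff_ofReal hKnn']
        exact lt_top_iff_ne_top.2 hAne
      rw [intervalIntegral.integral_of_le zero_le_one]
      have : ∫ x in Set.Ioc (0:ℝ) 1, K x * q (t*x) = A.toReal :=
        integral_eq_lintegral_of_nonneg_ae hKnn' hKm
      rw [show (∫ x in Set.Ioc (0:ℝ) 1, (∫ y in x..(1:ℝ), (1 - y) ^ (n - 1) / y) * q (t * x))
          = ∫ x in Set.Ioc (0:ℝ) 1, K x * q (t*x) from rfl, this]
      exact ENNReal.toReal_le_of_le_ofReal (Real.rpow_nonneg ht.le _) hAle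
    -- integrability of q * log and value
    have hlogc : ContinuousOn (fun t : ℝ => q t * Real.log (1 + t ^ (-(2*a)))) (Set.Ioi 0) := by
      refine (hqc.continuousOn).mul ?_
      refine ContinuousOn.log ?_ ?_
      · refine continuousOn_const.add fun s hs => ?_
        exact (Real.continuousAt_rpow_const s _ (Or.inl (ne_of_gt hs))).continuousWithinAt
      · intro s hs
        have : (0:ℝ) < s ^ (-(2*a)) := Real.rpow_pos_of_pos hs _
        positivity
    have hlognn : 0 ≤ᵐ[volume.restrict (Set.Ioi (0:ℝ))]
        (fun t : ℝ => q t * Real.log (1 + t ^ (-(2*a)))) := by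
      refine (ae_restrict_iff' measurableSet_Ioi).2 (ae_of_all _ fun s hs => ?_)
      have hs0 : (0:ℝ) < s := hs
      refine mul_nonneg (hq0 s hs0.le) (Real.log_nonneg ?_)
      have : (0:ℝ) < s ^ (-(2*a)) := Real.rpow_pos_of_pos hs0 _
      linarith
    have hid2 := ident2 h q hqc hq0 hderiv h0 ha0
    have hCne : ENNReal.ofReal (2*a) * G ≠ ⊤ :=
      ENNReal.mul_ne_top ENNReal.ofReal_ne_top hG
    have hlogint : IntegrableOn (fun t : ℝ => q t * Real.log (1 + t ^ (-(2*a)))) (Set.Ioi 0) := by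
      refine ⟨hlogc.aestronglyMeasurable measurableSet_Ioi, ?_⟩
      rw [hasFiniteIntegral_iff_ofReal hlognn, hid2]
      exact lt_top_iff_ne_top.2 hCne
    have hkey := hconj3 q hq0 hqc.continuousOn hyp1
    -- rewrite both integrals via lintegrals
    have e1 : ∫ t in Set.Ioi (0:ℝ), q t * Real.log (1 + t ^ (-(2*a)))
        = (ENNReal.ofReal (2*a) * G).toReal := by
      rw [integral_eq_lintegral_of_nonneg_ae hlognn
        (hlogc.aestronglyMeasurable measurableSet_Ioi), hid2]
    have e2 : ∫ t in Set.Ioi (0:ℝ), f t = G.toReal :=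
      integral_eq_lintegral_of_nonneg_ae hfnn hfm
    rw [show (∫ t in Set.Ioi (0:ℝ), (h t / t) * (1 / (1 + t ^ (2*a)))) =
      ∫ t in Set.Ioi (0:ℝ), f t from rfl, e2]
    rw [e1, ENNReal.toReal_mul, ENNReal.toReal_ofReal (by linarith)] at hkey
    have h2a : (0:ℝ) < 2*a := by linarith
    rw [show (Real.pi/2) * ∏ k ∈ Finset.Icc 1 (n-1), (1 + a / (k:ℝ))
        = (Real.pi * a * ∏ k ∈ Finset.Icc 1 (n-1), (1 + a / (k:ℝ))) / (2*a) by
      field_simp]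
    rw [le_div_iff₀ h2a]
    linarith
end
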